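/- Let n ≥ 7 and let Γ_1,…,Γ_{n−2} be 3-element subsets of N = {1,…,n} satisfying condition (†), with Γ_{n−3} = {1,2,n} and Γ_{n−2} = {3,4,n}. Let Ñ = {a, b, 5, 6, …, n} and for each i ≤ n−4 let Γ̃_i ⊆ Ñ be obtained from Γ_i by replacing the elements 1 and 2 by a and the elements 3 and 4 by b. Then |⋃_{i∈S} Γ̃_i| ≥ |S| + 2 for every nonempty proper subset S ⊆ {1,…,n−4}. -/

import Mathlib

open Finset

private lemma count_lemma (n a b : ℕ) (hab : a ≠ b) (ha : a ∉ Finset.Icc 5 n)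
    (hb : b ∉ Finset.Icc 5 n) (U : Finset ℕ) (hU : U ⊆ Finset.Icc 1 n) :
    U.card ≤ (U.image fun x =>
        if x = 1 ∨ x = 2 then a else if x = 3 ∨ x = 4 then b else x).card
      + (if 1 ∈ U ∧ 2 ∈ U then 1 else 0) + (if 3 ∈ U ∧ 4 ∈ U then 1 else 0) := by
  set f : ℕ → ℕ := fun x => if x = 1 ∨ x = 2 then a else if x = 3 ∨ x = 4 then b else x with hf
  set D : Finset ℕ := (if 1 ∈ U ∧ 2 ∈ U then {2} else ∅) ∪ (if 3 ∈ U ∧ 4 ∈ U then {4} else ∅)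
    with hD
  have hna : ¬ (5 ≤ a ∧ a ≤ n) := by simpa [Finset.mem_Icc] using ha
  have hnb : ¬ (5 ≤ b ∧ b ≤ n) := by simpa [Finset.mem_Icc] using hb
  have hDcard : D.card ≤ (if 1 ∈ U ∧ 2 ∈ U then 1 else 0) + (if 3 ∈ U ∧ 4 ∈ U then 1 else 0) := by
    refine (Finset.card_union_le _ _).trans ?_
    apply Nat.add_le_add <;> split_ifs <;> simp
  have hfx : ∀ x ∈ U, (f x = a ∧ (x = 1 ∨ x = 2)) ∨ (f x = b ∧ (x = 3 ∨ x = 4)) ∨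
      (f x = x ∧ 5 ≤ x ∧ x ≤ n) := by
    intro x hx
    have hxr := Finset.mem_Icc.mp (hU hx)
    by_cases h1 : x = 1 ∨ x = 2
    · exact Or.inl ⟨by simp [hf, h1], h1⟩
    by_cases h2 : x = 3 ∨ x = 4
    · exact Or.inr (Or.inl ⟨by simp [hf, h1, h2], h2⟩)
    · exact Or.inr (Or.inr ⟨by simp [hf, h1, h2], by omega⟩)
  have hinj : Set.InjOn f (U \ D : Finset ℕ) := by
    intro x hx y hy hxy
    simp only [Finset.coe_sdiff, Set.mem_diff, Finset.mem_coe] at hx hy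
    obtain ⟨hxU, hxD⟩ := hx
    obtain ⟨hyU, hyD⟩ := hy
    have hx2 : x = 2 → ¬(1 ∈ U ∧ 2 ∈ U) := fun h hp => hxD (by simp [hD, hp, h])
    have hx4 : x = 4 → ¬(3 ∈ U ∧ 4 ∈ U) := fun h hp => hxD (by simp [hD, hp, h])
    have hy2 : y = 2 → ¬(1 ∈ U ∧ 2 ∈ U) := fun h hp => hyD (by simp [hD, hp, h])
    have hy4 : y = 4 → ¬(3 ∈ U ∧ 4 ∈ U) := fun h hp => hyD (by simp [hD, hp, h])
    rcases hfx x hxU with ⟨ex, cx⟩ | ⟨ex, cx⟩ | ⟨ex, cx⟩ <;>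
      rcases hfx y hyU with ⟨ey, cy⟩ | ⟨ey, cy⟩ | ⟨ey, cy⟩ <;>
      rw [ex, ey] at hxy
    · -- both map to a
      by_cases hxy' : x = y
      · exact hxy'
      · exfalso
        have h12 : (1:ℕ) ∈ U ∧ 2 ∈ U ∧ (x = 2 ∨ y = 2) := by
          rcases cx with rfl | rfl <;> rcases cy with rfl | rfl
          · omega
          · exact ⟨hxU, hyU, Or.inr rfl⟩
          · exact ⟨hyU, hxU, Or.inl rfl⟩
          · omega
        rcases h12 with ⟨hU1, hU2, h2' | h2'⟩
        · exact hx2 h2' ⟨hU1, hU2⟩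
        · exact hy2 h2' ⟨hU1, hU2⟩
    · exact absurd hxy hab
    · exfalso; omega
    · exact absurd hxy.symm hab
    · -- both map to b
      by_cases hxy' : x = y
      · exact hxy'
      · exfalso
        have h34 : (3:ℕ) ∈ U ∧ 4 ∈ U ∧ (x = 4 ∨ y = 4) := by
          rcases cx with rfl | rfl <;> rcases cy with rfl | rfl
          · omega
          · exact ⟨hxU, hyU, Or.inr rfl⟩
          · exact ⟨hyU, hxU, Or.inl rfl⟩
          · omega
        rcases h34 with ⟨hU3, hU4, h4' | h4'⟩
        · exact hx4 h4' ⟨hU3, hU4⟩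
        · exact hy4 h4' ⟨hU3, hU4⟩
    · exfalso; omega
    · exfalso; omega
    · exfalso; omega
    · exact hxy
  calc U.card ≤ (U \ D).card + D.card := Finset.card_le_card_sdiff_add_card
    _ = ((U \ D).image f).card + D.card := by rw [Finset.card_image_of_injOn hinj]
    _ ≤ (U.image f).card + D.card := by
        exact Nat.add_le_add_right
          (Finset.card_le_card (Finset.image_subset_image Finset.sdiff_subset)) _
    _ ≤ _ := by omega

/-- Let `Γ_1,…,Γ_{n-2}` (n ≥ 7) be triples on `N = {1,…,n}` satisfying (†), with
`Γ_{n-3} = {1,2,n}` and `Γ_{n-2} = {3,4,n}`. Replacing `1, 2` by a new element `a` and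
`3, 4` by a new element `b` in each of `Γ_1,…,Γ_{n-4}` produces triples `Γ̃_i` on
`Ñ = {a, b, 5, …, n}` with `|⋃_{i∈S} Γ̃_i| ≥ |S| + 2` for every nonempty proper subset
`S ⊆ {1,…,n-4}`. -/
theorem contracted_hypergraph_ddagger (n : ℕ) (hn : 7 ≤ n) (Γ : ℕ → Finset ℕ)
    (a b : ℕ)
    (hsub : ∀ j ∈ Finset.Icc 1 (n - 2), Γ j ⊆ Finset.Icc 1 n)
    (hcard : ∀ j ∈ Finset.Icc 1 (n - 2), (Γ j).card = 3)
    (hdag : ∀ S ⊆ Finset.Icc 1 (n - 2), 2 ≤ S.card → S.card ≤ n - 3 →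
      S.card + 3 ≤ (S.biUnion Γ).card)
    (h1 : Γ (n - 3) = {1, 2, n})
    (h2 : Γ (n - 2) = {3, 4, n})
    (hab : a ≠ b) (ha : a ∉ Finset.Icc 5 n) (hb : b ∉ Finset.Icc 5 n) :
    ∀ S ⊆ Finset.Icc 1 (n - 4), S.Nonempty → S ≠ Finset.Icc 1 (n - 4) →
      S.card + 2 ≤ (S.biUnion fun j => (Γ j).image fun x =>
        if x = 1 ∨ x = 2 then a else if x = 3 ∨ x = 4 then b else x).card := by
  intro S hS hSne hSprop
  rw [← Finset.biUnion_image]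
  set f : ℕ → ℕ := fun x => if x = 1 ∨ x = 2 then a else if x = 3 ∨ x = 4 then b else x with hf
  set U := S.biUnion Γ with hU
  have hS2 : S ⊆ Finset.Icc 1 (n - 2) :=
    hS.trans (Finset.Icc_subset_Icc_right (by omega))
  have hUsub : U ⊆ Finset.Icc 1 n := by
    rw [hU]
    exact Finset.biUnion_subset.mpr fun j hj => hsub j (hS2 hj)
  have hcount := count_lemma n a b hab ha hb U hUsub
  rw [← hf] at hcount
  have hS1 : 1 ≤ S.card := Finset.card_pos.mpr hSne
  have hS5 : S.card + 1 ≤ n - 4 := by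
    have hss : S ⊂ Finset.Icc 1 (n - 4) :=
      ⟨hS, fun h => hSprop (Finset.Subset.antisymm hS h)⟩
    have h := Finset.card_lt_card hss
    rw [Nat.card_Icc] at h
    omega
  have key : ∀ T : Finset ℕ, T ⊆ Finset.Icc 1 (n - 2) → 2 ≤ T.card → T.card ≤ n - 3 →
      T.biUnion Γ ⊆ U ∪ {n} → T.card + 2 ≤ U.card := by
    intro T h1' h2' h3' h4'
    have hd := hdag T h1' h2' h3'
    have hle : (T.biUnion Γ).card ≤ (U ∪ {n}).card := Finset.card_le_card h4'
    have hle2 : (U ∪ {n}).card ≤ U.card + 1 := (Finset.card_union_le _ _).trans (by simp)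
    omega
  have hm2 : n - 2 ∉ S := fun h => by have := Finset.mem_Icc.mp (hS h); omega
  have hm3 : n - 3 ∉ S := fun h => by have := Finset.mem_Icc.mp (hS h); omega
  by_cases h12 : 1 ∈ U ∧ 2 ∈ U <;> by_cases h34 : 3 ∈ U ∧ 4 ∈ U
  · -- both pairs contained
    rw [if_pos h12, if_pos h34] at hcount
    have hm3' : n - 3 ∉ insert (n - 2) S := by
      simp only [Finset.mem_insert]
      push_neg
      exact ⟨by omega, hm3⟩
    have hTcard : (insert (n - 3) (insert (n - 2) S)).card = S.card + 2 := by
      rw [Finset.card_insert_of_notMem hm3', Finset.card_insert_of_notMem hm2]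
    have hkey := key (insert (n - 3) (insert (n - 2) S)) ?_ ?_ ?_ ?_
    · omega
    · intro x hx
      simp only [Finset.mem_insert] at hx
      rcases hx with rfl | rfl | hx
      · exact Finset.mem_Icc.mpr ⟨by omega, by omega⟩
      · exact Finset.mem_Icc.mpr ⟨by omega, by omega⟩
      · exact hS2 hx
    · rw [hTcard]; omega
    · rw [hTcard]; omega
    · intro x hx
      rw [Finset.mem_biUnion] at hx
      obtain ⟨j, hj, hxj⟩ := hx
      simp only [Finset.mem_insert] at hj
      rcases hj with rfl | rfl | hj
      · rw [h1] at hxj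
        simp only [Finset.mem_insert, Finset.mem_singleton] at hxj
        rcases hxj with rfl | rfl | rfl
        · exact Finset.mem_union_left _ h12.1
        · exact Finset.mem_union_left _ h12.2
        · exact Finset.mem_union_right _ (Finset.mem_singleton_self _)
      · rw [h2] at hxj
        simp only [Finset.mem_insert, Finset.mem_singleton] at hxj
        rcases hxj with rfl | rfl | rfl
        · exact Finset.mem_union_left _ h34.1
        · exact Finset.mem_union_left _ h34.2
        · exact Finset.mem_union_right _ (Finset.mem_singleton_self _)
      · exact Finset.mem_union_left _ (hU ▸ Finset.mem_biUnion.mpr ⟨j, hj, hxj⟩)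
  · -- only {1,2}
    rw [if_pos h12, if_neg h34] at hcount
    have hTcard : (insert (n - 3) S).card = S.card + 1 :=
      Finset.card_insert_of_notMem hm3
    have hkey := key (insert (n - 3) S) ?_ ?_ ?_ ?_
    · omega
    · intro x hx
      simp only [Finset.mem_insert] at hx
      rcases hx with rfl | hx
      · exact Finset.mem_Icc.mpr ⟨by omega, by omega⟩
      · exact hS2 hx
    · rw [hTcard]; omega
    · rw [hTcard]; omega
    · intro x hx
      rw [Finset.mem_biUnion] at hx
      obtain ⟨j, hj, hxj⟩ := hx
      simp only [Finset.mem_insert] at hj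
      rcases hj with rfl | hj
      · rw [h1] at hxj
        simp only [Finset.mem_insert, Finset.mem_singleton] at hxj
        rcases hxj with rfl | rfl | rfl
        · exact Finset.mem_union_left _ h12.1
        · exact Finset.mem_union_left _ h12.2
        · exact Finset.mem_union_right _ (Finset.mem_singleton_self _)
      · exact Finset.mem_union_left _ (hU ▸ Finset.mem_biUnion.mpr ⟨j, hj, hxj⟩)
  · -- only {3,4}
    rw [if_neg h12, if_pos h34] at hcount
    have hTcard : (insert (n - 2) S).card = S.card + 1 :=
      Finset.card_insert_of_notMem hm2
    have hkey := key (insert (n - 2) S) ?_ ?_ ?_ ?_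
    · omega
    · intro x hx
      simp only [Finset.mem_insert] at hx
      rcases hx with rfl | hx
      · exact Finset.mem_Icc.mpr ⟨by omega, by omega⟩
      · exact hS2 hx
    · rw [hTcard]; omega
    · rw [hTcard]; omega
    · intro x hx
      rw [Finset.mem_biUnion] at hx
      obtain ⟨j, hj, hxj⟩ := hx
      simp only [Finset.mem_insert] at hj
      rcases hj with rfl | hj
      · rw [h2] at hxj
        simp only [Finset.mem_insert, Finset.mem_singleton] at hxj
        rcases hxj with rfl | rfl | rfl
        · exact Finset.mem_union_left _ h34.1
        · exact Finset.mem_union_left _ h34.2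
        · exact Finset.mem_union_right _ (Finset.mem_singleton_self _)
      · exact Finset.mem_union_left _ (hU ▸ Finset.mem_biUnion.mpr ⟨j, hj, hxj⟩)
  · -- neither pair contained
    rw [if_neg h12, if_neg h34] at hcount
    by_cases hone : S.card = 1
    · obtain ⟨i, rfl⟩ := Finset.card_eq_one.mp hone
      have hi : i ∈ Finset.Icc 1 (n - 2) := hS2 (Finset.mem_singleton_self i)
      have hU3 : U.card = 3 := by
        rw [hU, Finset.singleton_biUnion]
        exact hcard i hi
      simp only [Finset.card_singleton]
      omega
    · have hkey := key S hS2 (by omega) (by omega) ?_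
      · omega
      · intro x hx
        exact Finset.mem_union_left _ (hU ▸ hx)
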